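/- Let L ≥ 3 be an integer, λ > 0, y > y* (threshold as above), and let x̄ be the larger positive root of x^{2L-1} - √λ·y·x^{L-1} + λ·x = 0. Then x̄ is a local minimizer of g(x) := (x^L - √λ·y)² + λ·L·x² on (0,∞). -/

import Mathlib

open Set

/-- For `y > y*`, the larger positive root `x̄` of `x^(2L-1) - √λ y x^(L-1) + λ x = 0` is a
local minimizer of `g(x) = (x^L - √λ y)² + λLx²` on `(0,∞)`. -/
theorem stmt_10 (L : ℕ) (hL : 3 ≤ L) (lam y xbar xund : ℝ) (hlam : 0 < lam)
    (hy : ((((L : ℝ) - 2) / L) ^ ((L : ℝ) / (2 * (L : ℝ) - 2))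
        + ((L : ℝ) / ((L : ℝ) - 2)) ^ (((L : ℝ) - 2) / (2 * (L : ℝ) - 2)))
        * lam ^ ((1 : ℝ) / (2 * (L : ℝ) - 2)) < y)
    (hxu : 0 < xund) (hxx : xund < xbar)
    (h1 : xbar ^ (2 * L - 1) - Real.sqrt lam * y * xbar ^ (L - 1) + lam * xbar = 0)
    (h2 : xund ^ (2 * L - 1) - Real.sqrt lam * y * xund ^ (L - 1) + lam * xund = 0) :
    IsLocalMinOn (fun x : ℝ => (x ^ L - Real.sqrt lam * y) ^ 2 + lam * L * x ^ 2)
      (Set.Ioi (0 : ℝ)) xbar := by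
  set c : ℝ := Real.sqrt lam * y with hc
  set g : ℝ → ℝ := fun x : ℝ => (x ^ L - c) ^ 2 + lam * L * x ^ 2 with hg
  have hxb : 0 < xbar := hxu.trans hxx
  -- the auxiliary function h(x) = x^L + λ x^(2-L)
  set h : ℝ → ℝ := fun x : ℝ => x ^ L + lam * x ^ ((2 : ℤ) - L) with hh
  -- h is convex on (0,∞)
  have hconv : ConvexOn ℝ (Ioi (0 : ℝ)) h := by
    have hA : ConvexOn ℝ (Ioi (0 : ℝ)) (fun x : ℝ => x ^ L) :=
      (convexOn_pow L).subset Ioi_subset_Ici_self (convex_Ioi _)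
    have hB : ConvexOn ℝ (Ioi (0 : ℝ)) (fun x : ℝ => lam * x ^ ((2 : ℤ) - L)) := by
      have := (convexOn_zpow (𝕜 := ℝ) ((2 : ℤ) - L)).smul hlam.le
      exact this
    exact hA.add hB
  -- factorization of f
  have factor : ∀ z : ℝ, z ≠ 0 →
      z ^ (2 * L - 1) - c * z ^ (L - 1) + lam * z = z ^ (L - 1) * (h z - c) := by
    intro z hz
    have e1 : z ^ (L - 1) * z ^ L = z ^ (2 * L - 1) := by
      rw [← pow_add]; congr 1; omega
    have e2 : z ^ (L - 1) * z ^ ((2 : ℤ) - L) = z := by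
      rw [← zpow_natCast z (L - 1), ← zpow_add₀ hz]
      have : ((L - 1 : ℕ) : ℤ) + ((2 : ℤ) - L) = 1 := by omega
      rw [this, zpow_one]
    simp only [hh]
    calc z ^ (2 * L - 1) - c * z ^ (L - 1) + lam * z
        = z ^ (L - 1) * z ^ L + lam * (z ^ (L - 1) * z ^ ((2 : ℤ) - L))
            - c * z ^ (L - 1) := by rw [e1, e2]; ring
      _ = z ^ (L - 1) * (z ^ L + lam * z ^ ((2 : ℤ) - L) - c) := by ring
  -- both roots give h z = c
  have key : ∀ z : ℝ, 0 < z →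
      z ^ (2 * L - 1) - c * z ^ (L - 1) + lam * z = 0 → h z = c := by
    intro z hz he
    have := (factor z hz.ne').symm.trans he
    rcases mul_eq_zero.1 this with h' | h'
    · exact absurd h' (pow_ne_zero _ hz.ne')
    · linarith [sub_eq_zero.1 h']
  have hbar : h xbar = c := key xbar hxb h1
  have hund : h xund = c := key xund hxu h2
  -- h ≤ c on (xund, xbar)
  have hle : ∀ x ∈ Ioo xund xbar, h x ≤ c := by
    intro x hx
    have hd : 0 < xbar - xund := by linarith
    set a : ℝ := (xbar - x) / (xbar - xund) with ha
    set b : ℝ := (x - xund) / (xbar - xund) with hb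
    have ha0 : 0 ≤ a := by apply div_nonneg <;> linarith [hx.2]
    have hb0 : 0 ≤ b := by apply div_nonneg <;> linarith [hx.1]
    have hab : a + b = 1 := by rw [ha, hb]; field_simp; ring
    have hx' : a * xund + b * xbar = x := by rw [ha, hb]; field_simp; ring
    have := hconv.2 (mem_Ioi.2 hxu) (mem_Ioi.2 hxb) ha0 hb0 hab
    rw [smul_eq_mul, smul_eq_mul, smul_eq_mul, smul_eq_mul] at this
    rw [hx', hund, hbar] at this
    have habc : a * c + b * c = c := by rw [← add_mul, hab, one_mul]
    linarith
  -- h ≥ c beyond xbar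
  have hge : ∀ x : ℝ, xbar < x → c ≤ h x := by
    intro x hx
    have hd : 0 < x - xund := by linarith
    set a : ℝ := (x - xbar) / (x - xund) with ha
    set b : ℝ := (xbar - xund) / (x - xund) with hb
    have ha0 : 0 ≤ a := by apply div_nonneg <;> linarith
    have hb0 : 0 < b := by apply div_pos <;> linarith
    have hab : a + b = 1 := by rw [ha, hb]; field_simp; ring
    have hx' : a * xund + b * x = xbar := by rw [ha, hb]; field_simp; ring
    have hxpos : (0 : ℝ) < x := hxb.trans hx
    have := hconv.2 (mem_Ioi.2 hxu) (mem_Ioi.2 hxpos) ha0 hb0.le hab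
    rw [smul_eq_mul, smul_eq_mul, smul_eq_mul, smul_eq_mul] at this
    rw [hx', hund, hbar] at this
    have habc : a * c + b * c = c := by rw [← add_mul, hab, one_mul]
    have hbc : b * c ≤ b * h x := by linarith
    exact le_of_mul_le_mul_left hbc hb0
  -- derivative of g
  have hderiv : ∀ x : ℝ, HasDerivAt g
      (2 * L * (x ^ (2 * L - 1) - c * x ^ (L - 1) + lam * x)) x := by
    intro x
    have d1 : HasDerivAt (fun x : ℝ => (x ^ L - c) ^ 2)
        ((2 : ℝ) * (x ^ L - c) ^ (2 - 1) * ((L : ℝ) * x ^ (L - 1))) x :=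
      ((hasDerivAt_pow L x).sub_const c).pow 2
    have d2 : HasDerivAt (fun x : ℝ => lam * (L : ℝ) * x ^ 2)
        (lam * (L : ℝ) * ((2 : ℝ) * x ^ (2 - 1))) x :=
      (hasDerivAt_pow 2 x).const_mul (lam * (L : ℝ))
    have := d1.add d2
    have e1 : x ^ (L - 1) * x ^ L = x ^ (2 * L - 1) := by
      rw [← pow_add]; congr 1; omega
    refine this.congr_deriv ?_
    linear_combination (2 : ℝ) * (L : ℝ) * e1
  have hcont : Continuous g := by fun_prop
  -- g antitone on [xund, xbar]
  have hanti : AntitoneOn g (Icc xund xbar) := by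
    apply antitoneOn_of_deriv_nonpos (convex_Icc _ _) hcont.continuousOn
    · intro x _; exact (hderiv x).differentiableAt.differentiableWithinAt
    · intro x hx
      rw [interior_Icc] at hx
      rw [(hderiv x).deriv]
      have hx0 : 0 < x := hxu.trans hx.1
      rw [factor x hx0.ne']
      have h1' : x ^ (L - 1) * (h x - c) ≤ 0 :=
        mul_nonpos_of_nonneg_of_nonpos (pow_nonneg hx0.le _)
          (sub_nonpos.2 (hle x hx))
      have hL0 : (0 : ℝ) ≤ 2 * L := by positivity
      exact mul_nonpos_of_nonneg_of_nonpos hL0 h1'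
  -- g monotone on [xbar, ∞)
  have hmono : MonotoneOn g (Ici xbar) := by
    apply monotoneOn_of_deriv_nonneg (convex_Ici _) hcont.continuousOn
    · intro x _; exact (hderiv x).differentiableAt.differentiableWithinAt
    · intro x hx
      rw [interior_Ici] at hx
      rw [(hderiv x).deriv]
      rw [factor x (hxb.trans hx).ne']
      have h1' : 0 ≤ x ^ (L - 1) * (h x - c) :=
        mul_nonneg (pow_nonneg (hxb.trans hx).le _) (sub_nonneg.2 (hge x hx))
      positivity
  -- conclude
  have hmem : Ioi xund ∈ nhdsWithin xbar (Ioi (0 : ℝ)) :=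
    nhdsWithin_le_nhds (Ioi_mem_nhds hxx)
  show ∀ᶠ x in nhdsWithin xbar (Ioi (0 : ℝ)), g xbar ≤ g x
  filter_upwards [hmem] with x hx
  rcases le_total x xbar with h' | h'
  · exact hanti ⟨le_of_lt hx, h'⟩ ⟨hxx.le, le_refl _⟩ h'
  · exact hmono (self_mem_Ici) h' h'
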